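/- Let n ≥ 1, let A be a real n×n matrix, let r be a real number that is not an eigenvalue of A, and let k ∈ {1,…,n}. Define Γ = (rI − A)⁻¹e_k / (e_kᵀ(rI − A)⁻ᵀ(rI − A)⁻¹e_k) ∈ ℝⁿ. Then Γ has minimum Euclidean norm among all row perturbations achieving eigenvalue r at row k: for every Γ' ∈ ℝⁿ such that r is an eigenvalue of A + e_kΓ'ᵀ, one has ‖Γ‖₂ ≤ ‖Γ'‖₂. -/

import Mathlib

open Matrix

/-- Euclidean (l2) norm of a vector in `Fin n → ℝ`. -/
noncomputable def euclNorm {n : ℕ} (v : Fin n → ℝ) : ℝ :=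
  ‖(EuclideanSpace.equiv (Fin n) ℝ).symm v‖

lemma euclNorm_inner {n : ℕ} (u v : Fin n → ℝ) :
    inner ℝ ((EuclideanSpace.equiv (Fin n) ℝ).symm u)
      ((EuclideanSpace.equiv (Fin n) ℝ).symm v) = u ⬝ᵥ v := by
  simp [PiLp.inner_apply, RCLike.inner_apply, dotProduct, mul_comm]

lemma euclNorm_smul {n : ℕ} (c : ℝ) (v : Fin n → ℝ) :
    euclNorm (c • v) = |c| * euclNorm v := by
  unfold euclNorm
  rw [_root_.map_smul, norm_smul, Real.norm_eq_abs]

lemma euclNorm_sq {n : ℕ} (v : Fin n → ℝ) :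
    euclNorm v ^ 2 = v ⬝ᵥ v := by
  rw [← euclNorm_inner v v, real_inner_self_eq_norm_sq]
  rfl

/-- The fragility perturbation `Γ` has minimum Euclidean norm among all row
perturbations `Γ'` placing the eigenvalue `r` into `A + e_k Γ'ᵀ`. -/
theorem fragility_perturbation_min_norm
    (n : ℕ) (hn : 1 ≤ n) (A : Matrix (Fin n) (Fin n) ℝ) (r : ℝ)
    (hr : r ∉ spectrum ℝ A) (k : Fin n)
    (Γ : Fin n → ℝ)
    (hΓ : Γ = (Pi.single k 1 ⬝ᵥ
        ((((r • (1 : Matrix (Fin n) (Fin n) ℝ) - A)⁻¹)ᵀ *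
          (r • (1 : Matrix (Fin n) (Fin n) ℝ) - A)⁻¹) *ᵥ Pi.single k 1))⁻¹ •
        ((r • (1 : Matrix (Fin n) (Fin n) ℝ) - A)⁻¹ *ᵥ Pi.single k 1)) :
    ∀ Γ' : Fin n → ℝ, r ∈ spectrum ℝ (A + vecMulVec (Pi.single k 1) Γ') →
      euclNorm Γ ≤ euclNorm Γ' := by
  intro Γ' hΓ'
  classical
  set B : Matrix (Fin n) (Fin n) ℝ := r • (1 : Matrix (Fin n) (Fin n) ℝ) - A with hB
  set e : Fin n → ℝ := Pi.single k 1 with he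
  -- B is invertible
  have hrB : IsUnit B := by
    by_contra h
    exact hr (by rwa [spectrum.mem_iff, Algebra.algebraMap_eq_smul_one])
  have hdetU : IsUnit B.det := (Matrix.isUnit_iff_isUnit_det B).mp hrB
  have hdet : B.det ≠ 0 := isUnit_iff_ne_zero.mp hdetU
  have hBB : B * B⁻¹ = 1 := Matrix.mul_nonsing_inv B hdetU
  set v : Fin n → ℝ := B⁻¹ *ᵥ e with hv
  have hBv : B *ᵥ v = e := by
    rw [hv, Matrix.mulVec_mulVec, hBB, Matrix.one_mulVec]
  have hvne : v ≠ 0 := by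
    intro h
    have h2 : e = 0 := by rw [← hBv, h, Matrix.mulVec_zero]
    have := congrFun h2 k
    simp [he] at this
  -- eigenvector for the perturbed matrix
  have hdet' : (B - vecMulVec e Γ').det = 0 := by
    rw [spectrum.mem_iff, Algebra.algebraMap_eq_smul_one] at hΓ'
    have h : r • (1 : Matrix (Fin n) (Fin n) ℝ) - (A + vecMulVec e Γ')
        = B - vecMulVec e Γ' := by rw [hB]; abel
    rw [h] at hΓ'
    by_contra h'
    exact hΓ' ((Matrix.isUnit_iff_isUnit_det _).mpr (isUnit_iff_ne_zero.mpr h'))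
  obtain ⟨x, hx0, hx⟩ := (Matrix.exists_mulVec_eq_zero_iff).mpr hdet'
  have hBx : B *ᵥ x = (Γ' ⬝ᵥ x) • e := by
    have h2 : vecMulVec e Γ' *ᵥ x = (Γ' ⬝ᵥ x) • e := by
      ext i
      simp only [Matrix.mulVec, vecMulVec, Matrix.of_apply, dotProduct,
        Pi.smul_apply, smul_eq_mul]
      rw [Finset.sum_mul]
      exact Finset.sum_congr rfl (fun j _ => by ring)
    have h1 : B *ᵥ x - vecMulVec e Γ' *ᵥ x = 0 := by
      rw [← Matrix.sub_mulVec]; exact hx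
    rw [h2] at h1
    exact sub_eq_zero.mp h1
  have hxcv : x = (Γ' ⬝ᵥ x) • v := by
    have h3 : B⁻¹ *ᵥ (B *ᵥ x) = B⁻¹ *ᵥ ((Γ' ⬝ᵥ x) • e) := by rw [hBx]
    rwa [Matrix.mulVec_mulVec, Matrix.nonsing_inv_mul B hdetU, Matrix.one_mulVec,
      Matrix.mulVec_smul, ← hv] at h3
  have hcne : Γ' ⬝ᵥ x ≠ 0 := by
    intro h
    apply hx0
    rw [hxcv, h, zero_smul]
  have hΓ'v : Γ' ⬝ᵥ v = 1 := by
    have h3 : Γ' ⬝ᵥ x = (Γ' ⬝ᵥ x) * (Γ' ⬝ᵥ v) := by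
      conv_lhs => rw [hxcv]
      rw [dotProduct_smul, smul_eq_mul]
    exact (mul_left_cancel₀ hcne (by rw [mul_one]; exact h3)).symm
  -- Γ = (v ⬝ᵥ v)⁻¹ • v
  have hΓv : Γ = (v ⬝ᵥ v)⁻¹ • v := by
    rw [hΓ]
    congr 2
    rw [← Matrix.mulVec_mulVec, ← hv, Matrix.dotProduct_mulVec,
      Matrix.vecMul_transpose, ← hv]
  -- norms
  set N : ℝ := euclNorm v with hN
  have hNpos : 0 < N := by
    rw [hN]
    unfold euclNorm
    rw [norm_pos_iff]
    intro h
    apply hvne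
    have := congrArg (EuclideanSpace.equiv (Fin n) ℝ) h
    simpa using this
  have hvv : v ⬝ᵥ v = N ^ 2 := (euclNorm_sq v).symm
  have hnormΓ : euclNorm Γ = N⁻¹ := by
    rw [hΓv, euclNorm_smul, hvv, abs_of_nonneg (by positivity), ← hN,
      sq, mul_inv, mul_assoc, inv_mul_cancel₀ hNpos.ne', mul_one]
  have hCS : (1 : ℝ) ≤ euclNorm Γ' * N := by
    have h2 := real_inner_le_norm ((EuclideanSpace.equiv (Fin n) ℝ).symm Γ')
      ((EuclideanSpace.equiv (Fin n) ℝ).symm v)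
    rw [euclNorm_inner] at h2
    calc (1 : ℝ) = Γ' ⬝ᵥ v := hΓ'v.symm
      _ ≤ euclNorm Γ' * euclNorm v := h2
      _ = euclNorm Γ' * N := by rw [hN]
  rw [hnormΓ, inv_le_iff_one_le_mul₀ hNpos]
  exact hCS
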